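/- For every pair of natural numbers g and k, there exists a finite graph whose girth is at least g and whose chromatic number is at least k. -/

import Mathlib

namespace ErdosGirth



variable {V : Type} {G : SimpleGraph V}

/-- In a path from `x` to `u`, if the edge `s(u,x)` occurs, the path has length 1. -/
lemma path_length_one_of_mem_edges {x u : V} (q : G.Walk x u) (hq : q.IsPath)
    (he : s(u, x) ∈ q.edges) : q.length = 1 := by
  cases q with
  | nil => simp at he
  | @cons _ y _ h₁ q₁ =>
    rw [SimpleGraph.Walk.cons_isPath_iff] at hq
    rw [SimpleGraph.Walk.edges_cons, List.mem_cons] at he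
    rcases he with he | he
    · rw [Sym2.eq_iff] at he
      rcases he with ⟨hux, hxy⟩ | ⟨huy, _⟩
      · exact absurd (hxy ▸ q₁.start_mem_support) hq.2
      · subst huy
        have : q₁.length = 0 := by
          have h0 : (⟨q₁, hq.1⟩ : G.Path u u) = SimpleGraph.Path.nil := SimpleGraph.Path.loop_eq _
          have : q₁ = (SimpleGraph.Path.nil : G.Path u u).1 := congrArg Subtype.val h0
          rw [this]; rfl
        simp [this]
    · exact absurd (SimpleGraph.Walk.snd_mem_support_of_mem_edges q₁ he) hq.2

lemma bypass_length_parity [DecidableEq V] (hG : G.IsAcyclic) {u v : V} (p : G.Walk u v) :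
    p.bypass.length % 2 = p.length % 2 := by
  induction p with
  | nil => rfl
  | @cons u x v h' p ih =>
    simp only [SimpleGraph.Walk.bypass]
    split_ifs with hu
    · -- the closed walk cons h' (takeUntil) must essentially be a doubled edge
      set q := p.bypass.takeUntil u hu with hqdef
      have hqpath : q.IsPath := (p.bypass_isPath).takeUntil hu
      have hnotcyc : ¬ (SimpleGraph.Walk.cons h' q).IsCycle := hG _
      rw [SimpleGraph.Walk.cons_isCycle_iff] at hnotcyc
      push_neg at hnotcyc
      have hedge : s(u, x) ∈ q.edges := hnotcyc hqpath
      have hq1 : q.length = 1 := path_length_one_of_mem_edges q hqpath hedge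
      have hspec : q.length + (p.bypass.dropUntil u hu).length = p.bypass.length := by
        rw [← SimpleGraph.Walk.length_append, SimpleGraph.Walk.take_spec]
      have := ih
      simp only [SimpleGraph.Walk.length_cons]
      omega
    · simp only [SimpleGraph.Walk.length_cons]
      omega

lemma walk_length_parity (hG : G.IsAcyclic) {u v : V} (p q : G.Walk u v) :
    p.length % 2 = q.length % 2 := by
  classical
  have h1 := bypass_length_parity hG p
  have h2 := bypass_length_parity hG q
  have : (⟨p.bypass, p.bypass_isPath⟩ : G.Path u v) = ⟨q.bypass, q.bypass_isPath⟩ :=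
    hG.path_unique _ _
  have h3 : p.bypass = q.bypass := congrArg Subtype.val this
  rw [h3] at h1
  omega

lemma colorable_two_of_isAcyclic (hG : G.IsAcyclic) : G.Colorable 2 := by
  classical
  have key : ∀ v : V, G.Reachable ((G.connectedComponentMk v).out) v := by
    intro v
    have : G.connectedComponentMk ((G.connectedComponentMk v).out) = G.connectedComponentMk v :=
      (G.connectedComponentMk v).out_eq
    exact (SimpleGraph.ConnectedComponent.eq.mp this)
  let C : V → ZMod 2 := fun v => ((key v).some.length : ZMod 2)
  have hCspec : ∀ (v : V) (w : G.Walk ((G.connectedComponentMk v).out) v),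
      C v = (w.length : ZMod 2) := by
    intro v w
    have h := walk_length_parity hG (key v).some w
    exact (ZMod.natCast_eq_natCast_iff _ _ _).mpr h
  have hvalid : ∀ {a b : V}, G.Adj a b → C a ≠ C b := by
    intro a b hab
    have hcomp : (G.connectedComponentMk a) = (G.connectedComponentMk b) :=
      SimpleGraph.ConnectedComponent.eq.mpr hab.reachable
    have hroot : (G.connectedComponentMk a).out = (G.connectedComponentMk b).out := by rw [hcomp]
    set w0 := ((key a).some.concat hab) with hw0
    have hb : C b = ((w0.copy hroot rfl).length : ZMod 2) := hCspec b (w0.copy hroot rfl)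
    rw [SimpleGraph.Walk.length_copy, hw0, SimpleGraph.Walk.length_concat] at hb
    push_cast at hb
    intro hCC
    exact one_ne_zero (left_eq_add.mp (hCC.trans hb))
  have coloring : G.Coloring (ZMod 2) := SimpleGraph.Coloring.mk C (fun hab => hvalid hab)
  have := coloring.colorable
  rwa [ZMod.card 2] at this



open Finset


section Prob

variable {ι : Type} [Fintype ι] [DecidableEq ι] (p q : ℚ)

/-- product Bernoulli weight -/
def wt (ω : ι → Bool) : ℚ := ∏ e : ι, (if ω e then p else q)

lemma wt_nonneg (hp : 0 ≤ p) (hq : 0 ≤ q) (ω : ι → Bool) : 0 ≤ wt p q ω :=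
  Finset.prod_nonneg fun e _ => by split <;> assumption

lemma sum_wt (h : p + q = 1) : ∑ ω : ι → Bool, wt p q ω = 1 := by
  have := Finset.prod_univ_sum (fun _ : ι => (Finset.univ : Finset Bool))
    (fun _ b => if b then p else q)
  rw [Fintype.piFinset_univ] at this
  unfold wt
  rw [← this]
  simp [h]

/-- probability that the outcome agrees with `f` on all of `F` -/
lemma sum_wt_restrict (hp : 0 ≤ p) (hq : 0 ≤ q) (h1 : p + q = 1)
    (F : Finset ι) (f : ι → Bool) :
    ∑ ω : ι → Bool, (if ∀ e ∈ F, ω e = f e then wt p q ω else 0)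
      = ∏ e ∈ F, (if f e then p else q) := by
  have hpt : ∀ ω : ι → Bool,
      (if ∀ e ∈ F, ω e = f e then wt p q ω else 0)
        = ∏ e : ι, (if e ∈ F ∧ ω e ≠ f e then 0 else if ω e then p else q) := by
    intro ω
    split_ifs with hcond
    · unfold wt
      refine Finset.prod_congr rfl fun e _ => ?_
      have : ¬ (e ∈ F ∧ ω e ≠ f e) := by
        rintro ⟨heF, hne⟩; exact hne (hcond e heF)
      rw [if_neg this]
    · push_neg at hcond
      obtain ⟨e, heF, hne⟩ := hcond
      exact (Finset.prod_eq_zero (Finset.mem_univ e) (by rw [if_pos ⟨heF, hne⟩])).symm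
  rw [Finset.sum_congr rfl fun ω _ => hpt ω]
  have hswap := Finset.prod_univ_sum (fun _ : ι => (Finset.univ : Finset Bool))
    (fun e b => if e ∈ F ∧ b ≠ f e then 0 else if b then p else q)
  rw [Fintype.piFinset_univ] at hswap
  rw [← hswap]
  have hfac : ∀ e : ι,
      (∑ b : Bool, (if e ∈ F ∧ b ≠ f e then 0 else if b then p else q))
        = if e ∈ F then (if f e then p else q) else 1 := by
    intro e
    by_cases heF : e ∈ F
    · cases hfe : f e <;> simp [heF, hfe, h1] <;> ring_nf <;> simp [add_comm] at h1 ⊢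
    · simp [heF, h1]
  rw [Finset.prod_congr rfl fun e _ => hfac e]
  rw [Finset.prod_ite_mem, Finset.univ_inter]

lemma markov (w X : (ι → Bool) → ℚ) (hw : ∀ ω, 0 ≤ w ω) (hX : ∀ ω, 0 ≤ X ω)
    (a : ℚ) (ha : 0 < a) :
    ∑ ω : ι → Bool, (if a ≤ X ω then w ω else 0) ≤ (∑ ω : ι → Bool, w ω * X ω) / a := by
  rw [Finset.sum_div]
  refine Finset.sum_le_sum fun ω _ => ?_
  split_ifs with h
  · rw [le_div_iff₀ ha]
    exact mul_le_mul_of_nonneg_left h (hw ω)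
  · exact div_nonneg (mul_nonneg (hw ω) (hX ω)) ha.le

lemma exists_good (w : (ι → Bool) → ℚ) (hw : ∀ ω, 0 ≤ w ω) (B : (ι → Bool) → Prop)
    [DecidablePred B]
    (hlt : ∑ ω : ι → Bool, (if B ω then w ω else 0) < ∑ ω : ι → Bool, w ω) :
    ∃ ω, ¬ B ω := by
  by_contra hall
  push_neg at hall
  have : ∀ ω : ι → Bool, (if B ω then w ω else 0) = w ω := fun ω => if_pos (hall ω)
  rw [Finset.sum_congr rfl fun ω _ => this ω] at hlt
  exact lt_irrefl _ hlt

end Prob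


open Finset SimpleGraph


instance finInhabited {n : ℕ} [NeZero n] : Inhabited (Fin n) := ⟨⟨0, Nat.pos_of_ne_zero (NeZero.ne n)⟩⟩

/-- Potential edges ("slots") of a graph on `Fin n`. -/
abbrev Slot (n : ℕ) := {e : Sym2 (Fin n) // ¬ e.IsDiag}

variable {n : ℕ}

def extOmega (ω : Slot n → Bool) (e : Sym2 (Fin n)) : Bool :=
  if h : e.IsDiag then false else ω ⟨e, h⟩

/-- The random graph determined by a choice of slots. -/
def rg (ω : Slot n → Bool) : SimpleGraph (Fin n) where
  Adj v w := extOmega ω s(v, w) = true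
  symm := by
    constructor
    intro v w h
    have : s(w, v) = s(v, w) := Sym2.eq_swap
    rw [this]
    exact h
  loopless := by
    constructor
    intro v h
    simp only [extOmega] at h
    rw [dif_pos (Sym2.mk_isDiag_iff.mpr rfl)] at h
    exact Bool.false_ne_true h

lemma rg_adj (ω : Slot n → Bool) (v w : Fin n) :
    (rg ω).Adj v w ↔ extOmega ω s(v, w) = true := Iff.rfl

/-- Cyclically closed lists witnessing short cycles. -/
def IsCycleList [NeZero n] (G : SimpleGraph (Fin n)) (ℓ : List (Fin n)) : Prop :=
  3 ≤ ℓ.length ∧ ℓ.Nodup ∧ List.Chain' G.Adj (ℓ ++ [ℓ.headI])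

lemma getElem_zero_eq_headI [NeZero n] (ℓ : List (Fin n)) (h : 0 < ℓ.length) :
    ℓ[0]'h = ℓ.headI := by
  cases ℓ with
  | nil => simp at h
  | cons a l => rfl

lemma cyclic_adj [NeZero n] {G : SimpleGraph (Fin n)} {ℓ : List (Fin n)}
    (h3 : 3 ≤ ℓ.length) (hch : List.Chain' G.Adj (ℓ ++ [ℓ.headI]))
    {j : ℕ} (hj : j < ℓ.length) :
    G.Adj (ℓ.getD j ℓ.headI) (ℓ.getD ((j + 1) % ℓ.length) ℓ.headI) := by
  replace hch : ∀ (i : ℕ) (h : i < (ℓ ++ [ℓ.headI]).length - 1),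
      G.Adj ((ℓ ++ [ℓ.headI]).get ⟨i, by omega⟩) ((ℓ ++ [ℓ.headI]).get ⟨i+1, by omega⟩) := by
    intro i h; exact List.isChain_iff_getElem.mp hch i (by omega)
  have hlen : (ℓ ++ [ℓ.headI]).length = ℓ.length + 1 := by simp
  have hj' : j < (ℓ ++ [ℓ.headI]).length - 1 := by omega
  have hadj := hch j hj'
  have h1 : (ℓ ++ [ℓ.headI]).get ⟨j, by omega⟩ = ℓ.getD j ℓ.headI := by
    rw [List.get_eq_getElem, List.getElem_append_left hj, List.getD_eq_getElem ℓ _ hj]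
  rw [h1] at hadj
  rcases Nat.lt_or_ge (j + 1) ℓ.length with hlt | hge
  · have h2 : (ℓ ++ [ℓ.headI]).get ⟨j + 1, by omega⟩ = ℓ.getD ((j + 1) % ℓ.length) ℓ.headI := by
      rw [Nat.mod_eq_of_lt hlt, List.get_eq_getElem, List.getElem_append_left hlt,
        List.getD_eq_getElem ℓ _ hlt]
    rwa [h2] at hadj
  · have hj1 : j + 1 = ℓ.length := by omega
    have h2 : (ℓ ++ [ℓ.headI]).get ⟨j + 1, by omega⟩ = ℓ.getD ((j + 1) % ℓ.length) ℓ.headI := by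
      have hm : (j + 1) % ℓ.length = 0 := by rw [hj1]; exact Nat.mod_self _
      have h0 : 0 < ℓ.length := by omega
      rw [hm, List.getD_eq_getElem ℓ _ h0, getElem_zero_eq_headI ℓ h0, List.get_eq_getElem,
        List.getElem_append_right (by omega : ℓ.length ≤ j + 1)]
      simp [hj1]
    rwa [h2] at hadj

/-- The cyclic edge set of a list. -/
def cedges [NeZero n] (ℓ : List (Fin n)) : Finset (Sym2 (Fin n)) :=
  (Finset.range ℓ.length).image fun j => s(ℓ.getD j ℓ.headI, ℓ.getD ((j + 1) % ℓ.length) ℓ.headI)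

lemma getD_eq_get [NeZero n] (ℓ : List (Fin n)) (d : Fin n) {j : ℕ} (hj : j < ℓ.length) :
    ℓ.getD j d = ℓ.get ⟨j, hj⟩ := by
  rw [List.getD_eq_getElem ℓ _ hj, List.get_eq_getElem]

lemma mod_succ_cases {l j : ℕ} (h3 : 3 ≤ l) (hj : j < l) :
    (j + 1) % l = j + 1 ∧ j + 1 < l ∨ (j + 1) % l = 0 ∧ j + 1 = l := by
  rcases Nat.lt_or_ge (j + 1) l with hlt | hge
  · exact Or.inl ⟨Nat.mod_eq_of_lt hlt, hlt⟩
  · have : j + 1 = l := by omega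
    exact Or.inr ⟨by rw [this, Nat.mod_self], this⟩

lemma nodup_get_inj [NeZero n] {ℓ : List (Fin n)} (hnd : ℓ.Nodup) {i j : ℕ}
    (hi : i < ℓ.length) (hj : j < ℓ.length)
    (h : ℓ.get ⟨i, hi⟩ = ℓ.get ⟨j, hj⟩) : i = j := by
  have := List.nodup_iff_injective_get.mp hnd h
  exact congrArg Fin.val this

lemma card_cedges [NeZero n] {ℓ : List (Fin n)} (h3 : 3 ≤ ℓ.length) (hnd : ℓ.Nodup) :
    (cedges ℓ).card = ℓ.length ∧ ∀ e ∈ cedges ℓ, ¬ e.IsDiag := by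
  have hne : ∀ j : ℕ, j < ℓ.length →
      ℓ.getD j ℓ.headI ≠ ℓ.getD ((j + 1) % ℓ.length) ℓ.headI := by
    intro j hj heq
    rcases mod_succ_cases h3 hj with ⟨hm, hlt⟩ | ⟨hm, hsum⟩
    · rw [hm] at heq
      rw [getD_eq_get ℓ _ hj, getD_eq_get ℓ _ hlt] at heq
      have := nodup_get_inj hnd hj hlt heq
      omega
    · rw [hm] at heq
      have h0 : 0 < ℓ.length := by omega
      rw [getD_eq_get ℓ _ hj, getD_eq_get ℓ _ h0] at heq
      have := nodup_get_inj hnd hj h0 heq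
      omega
  constructor
  · rw [cedges, Finset.card_image_of_injOn, Finset.card_range]
    intro i hi j hj heq
    rw [Finset.mem_coe, Finset.mem_range] at hi hj
    rw [Sym2.eq_iff] at heq
    rcases heq with ⟨ha, _⟩ | ⟨ha, hb⟩
    · rw [getD_eq_get ℓ _ hi, getD_eq_get ℓ _ hj] at ha
      exact nodup_get_inj hnd hi hj ha
    · -- i ↦ (i+1)%l and j ↦ ... degenerate case
      exfalso
      have hmi := (Nat.mod_lt (i+1) (by omega : 0 < ℓ.length))
      have hmj := (Nat.mod_lt (j+1) (by omega : 0 < ℓ.length))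
      rw [getD_eq_get ℓ _ hi, getD_eq_get ℓ _ hmj] at ha
      rw [getD_eq_get ℓ _ hmi, getD_eq_get ℓ _ hj] at hb
      have e1 : i = (j + 1) % ℓ.length := nodup_get_inj hnd hi hmj ha
      have e2 : (i + 1) % ℓ.length = j := nodup_get_inj hnd hmi hj hb
      rcases mod_succ_cases h3 hj with ⟨hm, hlt⟩ | ⟨hm, hsum⟩
      · rw [hm] at e1
        rcases mod_succ_cases h3 hi with ⟨hm', hlt'⟩ | ⟨hm', hsum'⟩
        · rw [hm'] at e2; omega
        · rw [hm'] at e2; omega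
      · rw [hm] at e1
        subst e1
        rcases mod_succ_cases h3 (by omega : (0:ℕ) < ℓ.length) with ⟨hm', _⟩ | ⟨hm', hsum'⟩
        · rw [hm'] at e2; omega
        · omega
  · intro e he
    rw [cedges, Finset.mem_image] at he
    obtain ⟨j, hj, rfl⟩ := he
    rw [Finset.mem_range] at hj
    rw [Sym2.mk_isDiag_iff]
    exact hne j hj

/-- slots version of the cyclic edges -/
def scedges [NeZero n] (ℓ : List (Fin n)) : Finset (Slot n) :=
  (cedges ℓ).subtype (fun e => ¬ e.IsDiag)

lemma card_scedges [NeZero n] {ℓ : List (Fin n)} (h3 : 3 ≤ ℓ.length) (hnd : ℓ.Nodup) :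
    (scedges ℓ).card = ℓ.length := by
  obtain ⟨hcard, hdiag⟩ := card_cedges h3 hnd
  rw [scedges, Finset.card_subtype, Finset.filter_true_of_mem hdiag, hcard]

lemma slots_present_of_isCycleList [NeZero n] {ω : Slot n → Bool} {ℓ : List (Fin n)}
    (h : IsCycleList (rg ω) ℓ) : ∀ e ∈ scedges ℓ, ω e = true := by
  obtain ⟨h3, hnd, hch⟩ := h
  intro e he
  rw [scedges, Finset.mem_subtype] at he
  rw [cedges, Finset.mem_image] at he
  obtain ⟨j, hj, hje⟩ := he
  rw [Finset.mem_range] at hj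
  have hadj := cyclic_adj h3 hch hj
  rw [rg_adj] at hadj
  rw [extOmega, dif_neg (hje ▸ e.2)] at hadj
  have hs : (⟨s(ℓ.getD j ℓ.headI, ℓ.getD ((j + 1) % ℓ.length) ℓ.headI), hje ▸ e.2⟩ : Slot n) = e :=
    Subtype.ext hje
  rwa [hs] at hadj

/-- All lists of length `< g`. -/
def allShort (n g : ℕ) : Finset (List (Fin n)) :=
  (Finset.range g).biUnion fun i =>
    (Finset.univ : Finset (List.Vector (Fin n) i)).image List.Vector.toList

lemma mem_allShort {g : ℕ} {ℓ : List (Fin n)} : ℓ ∈ allShort n g ↔ ℓ.length < g := by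
  rw [allShort, Finset.mem_biUnion]
  constructor
  · rintro ⟨i, hi, hmem⟩
    rw [Finset.mem_image] at hmem
    obtain ⟨v, _, rfl⟩ := hmem
    rw [List.Vector.toList_length]
    exact Finset.mem_range.mp hi
  · intro h
    exact ⟨ℓ.length, Finset.mem_range.mpr h,
      Finset.mem_image.mpr ⟨⟨ℓ, rfl⟩, Finset.mem_univ _, rfl⟩⟩



open scoped Classical

lemma expectation_bound (g : ℕ) {n m : ℕ} [NeZero n] (hm : 1 ≤ m) :
    ∑ ω : Slot n → Bool, wt (1/(m:ℚ)) (1-1/(m:ℚ)) ω *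
        (((allShort n g).filter (fun ℓ => IsCycleList (rg ω) ℓ)).card : ℚ)
      ≤ ∑ i ∈ Finset.Icc 3 (g-1), (n:ℚ)^i * (1/(m:ℚ))^i := by
  have hm' : (1:ℚ) ≤ (m:ℚ) := by exact_mod_cast hm
  have hp0 : 0 ≤ (1:ℚ)/m := by positivity
  have hq0 : 0 ≤ 1 - 1/(m:ℚ) := by
    rw [sub_nonneg]
    rw [div_le_one (by linarith)]
    linarith
  have hpq : (1:ℚ)/m + (1 - 1/(m:ℚ)) = 1 := by ring
  have hwt : ∀ ω : Slot n → Bool, 0 ≤ wt (1/(m:ℚ)) (1-1/(m:ℚ)) ω :=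
    wt_nonneg _ _ hp0 hq0
  -- rewrite card as a sum and swap
  have hstep1 : ∀ ω : Slot n → Bool,
      wt (1/(m:ℚ)) (1-1/(m:ℚ)) ω *
        (((allShort n g).filter (fun ℓ => IsCycleList (rg ω) ℓ)).card : ℚ)
      = ∑ ℓ ∈ allShort n g,
          (if IsCycleList (rg ω) ℓ then wt (1/(m:ℚ)) (1-1/(m:ℚ)) ω else 0) := by
    intro ω
    rw [Finset.card_filter]
    push_cast
    rw [Finset.mul_sum]
    refine Finset.sum_congr rfl fun ℓ _ => ?_
    split_ifs <;> simp
  rw [Finset.sum_congr rfl fun ω _ => hstep1 ω, Finset.sum_comm]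
  -- per-list bound
  have hper : ∀ ℓ ∈ allShort n g,
      (∑ ω : Slot n → Bool, if IsCycleList (rg ω) ℓ then wt (1/(m:ℚ)) (1-1/(m:ℚ)) ω else 0)
        ≤ (if 3 ≤ ℓ.length ∧ ℓ.Nodup then (1/(m:ℚ))^ℓ.length else 0) := by
    intro ℓ _
    by_cases hstruct : 3 ≤ ℓ.length ∧ ℓ.Nodup
    · rw [if_pos hstruct]
      have hbound : ∀ ω : Slot n → Bool,
          (if IsCycleList (rg ω) ℓ then wt (1/(m:ℚ)) (1-1/(m:ℚ)) ω else 0)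
            ≤ (if ∀ e ∈ scedges ℓ, ω e = (fun _ => true) e
                then wt (1/(m:ℚ)) (1-1/(m:ℚ)) ω else 0) := by
        intro ω
        split_ifs with h1 h2
        · exact le_refl _
        · exact absurd (slots_present_of_isCycleList h1) h2
        · exact hwt ω
        · exact le_refl _
      calc ∑ ω : Slot n → Bool, (if IsCycleList (rg ω) ℓ then wt (1/(m:ℚ)) (1-1/(m:ℚ)) ω else 0)
          ≤ ∑ ω : Slot n → Bool, (if ∀ e ∈ scedges ℓ, ω e = (fun _ => true) e
              then wt (1/(m:ℚ)) (1-1/(m:ℚ)) ω else 0) := Finset.sum_le_sum fun ω _ => hbound ω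
        _ = ∏ e ∈ scedges ℓ, (if (fun _ => true) e then (1:ℚ)/m else (1 - 1/(m:ℚ))) :=
            sum_wt_restrict _ _ hp0 hq0 hpq _ _
        _ = (1/(m:ℚ))^ℓ.length := by
            rw [Finset.prod_congr rfl (fun e _ => if_pos rfl), Finset.prod_const,
              card_scedges hstruct.1 hstruct.2]
    · rw [if_neg hstruct]
      have : ∀ ω : Slot n → Bool,
          (if IsCycleList (rg ω) ℓ then wt (1/(m:ℚ)) (1-1/(m:ℚ)) ω else 0) = 0 := by
        intro ω
        rw [if_neg]
        intro h
        exact hstruct ⟨h.1, h.2.1⟩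
      rw [Finset.sum_congr rfl fun ω _ => this ω, Finset.sum_const, smul_zero]
  calc ∑ ℓ ∈ allShort n g, ∑ ω : Slot n → Bool,
        (if IsCycleList (rg ω) ℓ then wt (1/(m:ℚ)) (1-1/(m:ℚ)) ω else 0)
      ≤ ∑ ℓ ∈ allShort n g, (if 3 ≤ ℓ.length ∧ ℓ.Nodup then (1/(m:ℚ))^ℓ.length else 0) :=
        Finset.sum_le_sum hper
    _ ≤ ∑ i ∈ Finset.Icc 3 (g-1), (n:ℚ)^i * (1/(m:ℚ))^i := by
        rw [allShort]
        rw [Finset.sum_biUnion]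
        · have hin : ∀ i ∈ Finset.range g,
              (∑ ℓ ∈ (Finset.univ : Finset (List.Vector (Fin n) i)).image List.Vector.toList,
                (if 3 ≤ ℓ.length ∧ ℓ.Nodup then (1/(m:ℚ))^ℓ.length else 0))
              ≤ (if 3 ≤ i then (n:ℚ)^i * (1/(m:ℚ))^i else 0) := by
            intro i _
            by_cases h3 : 3 ≤ i
            · rw [if_pos h3]
              have hterm : ∀ ℓ ∈ (Finset.univ : Finset (List.Vector (Fin n) i)).image
                  List.Vector.toList,
                  (if 3 ≤ ℓ.length ∧ ℓ.Nodup then (1/(m:ℚ))^ℓ.length else 0) ≤ (1/(m:ℚ))^i := by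
                intro ℓ hℓ
                rw [Finset.mem_image] at hℓ
                obtain ⟨v, _, rfl⟩ := hℓ
                rw [List.Vector.toList_length]
                split_ifs
                · exact le_refl _
                · positivity
              calc (∑ ℓ ∈ (Finset.univ : Finset (List.Vector (Fin n) i)).image
                    List.Vector.toList,
                    (if 3 ≤ ℓ.length ∧ ℓ.Nodup then (1/(m:ℚ))^ℓ.length else 0))
                  ≤ ∑ _ℓ ∈ (Finset.univ : Finset (List.Vector (Fin n) i)).image
                    List.Vector.toList, (1/(m:ℚ))^i := Finset.sum_le_sum hterm
                _ = (((Finset.univ : Finset (List.Vector (Fin n) i)).image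
                    List.Vector.toList).card : ℚ) * (1/(m:ℚ))^i := by
                    rw [Finset.sum_const, nsmul_eq_mul]
                _ ≤ (n:ℚ)^i * (1/(m:ℚ))^i := by
                    have hc : ((Finset.univ : Finset (List.Vector (Fin n) i)).image
                        List.Vector.toList).card ≤ n^i := by
                      calc _ ≤ (Finset.univ : Finset (List.Vector (Fin n) i)).card :=
                            Finset.card_image_le
                        _ = n^i := by rw [Finset.card_univ, card_vector, Fintype.card_fin]
                    have : (((Finset.univ : Finset (List.Vector (Fin n) i)).image
                        List.Vector.toList).card : ℚ) ≤ (n:ℚ)^i := by exact_mod_cast hc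
                    exact mul_le_mul_of_nonneg_right this (by positivity)
            · rw [if_neg h3]
              have : ∀ ℓ ∈ (Finset.univ : Finset (List.Vector (Fin n) i)).image
                  List.Vector.toList,
                  (if 3 ≤ ℓ.length ∧ ℓ.Nodup then (1/(m:ℚ))^ℓ.length else 0) = 0 := by
                intro ℓ hℓ
                rw [Finset.mem_image] at hℓ
                obtain ⟨v, _, rfl⟩ := hℓ
                rw [if_neg]
                rintro ⟨hl, -⟩
                rw [List.Vector.toList_length] at hl
                exact h3 hl
              rw [Finset.sum_congr rfl this, Finset.sum_const, smul_zero]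
          calc _ ≤ ∑ i ∈ Finset.range g, (if 3 ≤ i then (n:ℚ)^i * (1/(m:ℚ))^i else 0) :=
                Finset.sum_le_sum hin
            _ = ∑ i ∈ Finset.Icc 3 (g-1), (n:ℚ)^i * (1/(m:ℚ))^i := by
                rw [← Finset.sum_filter]
                refine Finset.sum_congr ?_ fun _ _ => rfl
                ext i
                simp only [Finset.mem_filter, Finset.mem_range, Finset.mem_Icc]
                omega
        · intro i _ j _ hij
          refine Finset.disjoint_left.mpr fun ℓ hi hj => ?_
          rw [Finset.mem_image] at hi hj
          obtain ⟨v, _, rfl⟩ := hi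
          obtain ⟨u, _, hu⟩ := hj
          have h1 := List.Vector.toList_length v
          have h2 := List.Vector.toList_length u
          rw [hu] at h2
          omega


/-- slots with both endpoints in `S` -/
def sslots {n : ℕ} (S : Finset (Fin n)) : Finset (Slot n) :=
  Finset.univ.filter (fun e : Slot n => ∀ v ∈ (e : Sym2 (Fin n)), v ∈ S)

lemma slots_absent_of_indep {n : ℕ} {ω : Slot n → Bool} {S : Finset (Fin n)}
    (h : ∀ v ∈ S, ∀ w ∈ S, ¬ (rg ω).Adj v w) :
    ∀ e ∈ sslots S, ω e = false := by
  rintro ⟨e1, hd⟩ he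
  rw [sslots, Finset.mem_filter] at he
  induction e1 with
  | _ a b =>
    have ha : a ∈ S := he.2 a (Sym2.mem_mk_left a b)
    have hb : b ∈ S := he.2 b (Sym2.mem_mk_right a b)
    have hnadj := h a ha b hb
    rw [rg_adj] at hnadj
    rw [extOmega, dif_neg hd] at hnadj
    exact Bool.not_eq_true _ ▸ (by simpa using hnadj)

lemma sslots_card_ge {n t m : ℕ} {S : Finset (Fin n)} (hS : S.card = t)
    (ht : 4*(m*(n+1)) ≤ t*(t-1)) : 2*(m*(n+1)) ≤ (sslots S).card := by
  classical
  -- image of offDiag pairs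
  set I : Finset (Sym2 (Fin n)) := S.offDiag.image (fun x => s(x.1, x.2)) with hI
  have hoff : S.offDiag.card = t * t - t := by rw [Finset.offDiag_card, hS]
  have hfib : ∀ e ∈ I, (S.offDiag.filter (fun x => s(x.1, x.2) = e)).card ≤ 2 := by
    intro e he
    rw [hI, Finset.mem_image] at he
    obtain ⟨⟨a, b⟩, _, rfl⟩ := he
    have hsub : S.offDiag.filter (fun x => s(x.1, x.2) = s(a, b)) ⊆ {(a, b), (b, a)} := by
      intro x hx
      rw [Finset.mem_filter] at hx
      rw [Sym2.eq_iff] at hx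
      rcases hx.2 with ⟨h1, h2⟩ | ⟨h1, h2⟩
      · simp [Prod.ext_iff, h1, h2]
      · simp [Prod.ext_iff, h1, h2]
    calc _ ≤ ({(a, b), (b, a)} : Finset (Fin n × Fin n)).card := Finset.card_le_card hsub
      _ ≤ 2 := Finset.card_insert_le _ _ |>.trans (by simp)
  have hoffle : S.offDiag.card ≤ 2 * I.card := Finset.card_le_mul_card_image _ 2 hfib
  -- each element of I is a nondiag sym2 inside S
  have hInd : ∀ e ∈ I, ¬ e.IsDiag ∧ ∀ v ∈ e, v ∈ S := by
    intro e he
    rw [hI, Finset.mem_image] at he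
    obtain ⟨⟨a, b⟩, hab, rfl⟩ := he
    rw [Finset.mem_offDiag] at hab
    refine ⟨by rw [Sym2.mk_isDiag_iff]; exact hab.2.2, ?_⟩
    intro v hv
    rw [Sym2.mem_iff] at hv
    rcases hv with rfl | rfl
    · exact hab.1
    · exact hab.2.1
  have hIcard : I.card ≤ (sslots S).card := by
    have : (I.subtype (fun e => ¬ e.IsDiag)) ⊆ sslots S := by
      intro e he
      rw [Finset.mem_subtype] at he
      rw [sslots, Finset.mem_filter]
      exact ⟨Finset.mem_univ _, (hInd _ he).2⟩
    calc I.card = (I.filter (fun e => ¬ e.IsDiag)).card := by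
          rw [Finset.filter_true_of_mem (fun e he => (hInd e he).1)]
      _ = (I.subtype (fun e => ¬ e.IsDiag)).card := (Finset.card_subtype _ _).symm
      _ ≤ (sslots S).card := Finset.card_le_card this
  -- conclude
  have ht1 : t * (t - 1) = t * t - t := by rw [Nat.mul_sub, Nat.mul_one]
  omega

lemma indep_sum_bound {n m t : ℕ} [NeZero n] (hm : 1 ≤ m) (hn : 1 ≤ n)
    (ht : 4*(m*(n+1)) ≤ t*(t-1)) :
    ∑ ω : Slot n → Bool,
        (if ∃ S : Finset (Fin n), S.card = t ∧ ∀ v ∈ S, ∀ w ∈ S, ¬ (rg ω).Adj v w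
          then wt (1/(m:ℚ)) (1-1/(m:ℚ)) ω else 0)
      < 1/2 := by
  have hm' : (1:ℚ) ≤ (m:ℚ) := by exact_mod_cast hm
  have hmpos : (0:ℚ) < (m:ℚ) := by linarith
  have hp0 : 0 ≤ (1:ℚ)/m := by positivity
  have hq0 : 0 ≤ 1 - 1/(m:ℚ) := by
    rw [sub_nonneg, div_le_one hmpos]; linarith
  have hq1 : 1 - 1/(m:ℚ) ≤ 1 := by
    have : 0 ≤ (1:ℚ)/m := hp0
    linarith
  have hpq : (1:ℚ)/m + (1 - 1/(m:ℚ)) = 1 := by ring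
  have hwt : ∀ ω : Slot n → Bool, 0 ≤ wt (1/(m:ℚ)) (1-1/(m:ℚ)) ω := wt_nonneg _ _ hp0 hq0
  -- q^(2m) ≤ 1/3 by Bernoulli
  have hq3 : (1 - 1/(m:ℚ))^(2*m) ≤ 1/3 := by
    have hbern : (1:ℚ) + (2*m : ℕ) * (1/(m:ℚ)) ≤ (1 + 1/(m:ℚ))^(2*m) := by
      have := one_add_mul_le_pow (a := (1:ℚ)/m) (by linarith) (2*m)
      exact this
    have h3 : (3:ℚ) ≤ (1 + 1/(m:ℚ))^(2*m) := by
      have : ((2*m : ℕ) : ℚ) * (1/(m:ℚ)) = 2 := by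
        push_cast
        field_simp
      linarith [hbern, this]
    have hprod : (1 - 1/(m:ℚ))^(2*m) * (1 + 1/(m:ℚ))^(2*m) ≤ 1 := by
      rw [← mul_pow]
      have habs : (1 - 1/(m:ℚ)) * (1 + 1/(m:ℚ)) = 1 - (1/(m:ℚ))^2 := by ring
      have h01 : 0 ≤ (1 - 1/(m:ℚ)) * (1 + 1/(m:ℚ)) := by
        apply mul_nonneg hq0; linarith
      have h11 : (1 - 1/(m:ℚ)) * (1 + 1/(m:ℚ)) ≤ 1 := by
        rw [habs]
        have : 0 ≤ (1/(m:ℚ))^2 := by positivity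
        linarith
      calc ((1 - 1/(m:ℚ)) * (1 + 1/(m:ℚ)))^(2*m) ≤ 1^(2*m) := pow_le_pow_left₀ h01 h11 _
        _ = 1 := one_pow _
    have hqp : (0:ℚ) ≤ (1 - 1/(m:ℚ))^(2*m) := pow_nonneg hq0 _
    nlinarith [hprod, h3, hqp, mul_nonneg (sub_nonneg.mpr h3) hqp]
  -- bound by sum over subsets of size t
  set q : ℚ := 1 - 1/(m:ℚ) with hqdef
  set SS : Finset (Finset (Fin n)) := Finset.univ.filter (fun S => S.card = t) with hSS
  have hpoint : ∀ ω : Slot n → Bool,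
      (if ∃ S : Finset (Fin n), S.card = t ∧ ∀ v ∈ S, ∀ w ∈ S, ¬ (rg ω).Adj v w
        then wt (1/(m:ℚ)) q ω else 0)
      ≤ ∑ S ∈ SS, (if ∀ v ∈ S, ∀ w ∈ S, ¬ (rg ω).Adj v w then wt (1/(m:ℚ)) q ω else 0) := by
    intro ω
    have hnn : ∀ S' ∈ SS, (0:ℚ) ≤
        (if ∀ v ∈ S', ∀ w ∈ S', ¬ (rg ω).Adj v w then wt (1/(m:ℚ)) q ω else 0) := by
      intro S' _
      split_ifs
      exacts [hwt ω, le_refl 0]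
    split_ifs with hex
    · obtain ⟨S, hSc, hSi⟩ := hex
      have hmem : S ∈ SS := by rw [hSS, Finset.mem_filter]; exact ⟨Finset.mem_univ _, hSc⟩
      calc wt (1/(m:ℚ)) q ω
          = (if ∀ v ∈ S, ∀ w ∈ S, ¬ (rg ω).Adj v w then wt (1/(m:ℚ)) q ω else 0) :=
            (if_pos hSi).symm
        _ ≤ _ := Finset.single_le_sum hnn hmem
    · exact Finset.sum_nonneg hnn
  calc ∑ ω : Slot n → Bool,
        (if ∃ S : Finset (Fin n), S.card = t ∧ ∀ v ∈ S, ∀ w ∈ S, ¬ (rg ω).Adj v w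
          then wt (1/(m:ℚ)) q ω else 0)
      ≤ ∑ ω : Slot n → Bool, ∑ S ∈ SS,
          (if ∀ v ∈ S, ∀ w ∈ S, ¬ (rg ω).Adj v w then wt (1/(m:ℚ)) q ω else 0) :=
        Finset.sum_le_sum fun ω _ => hpoint ω
    _ = ∑ S ∈ SS, ∑ ω : Slot n → Bool,
          (if ∀ v ∈ S, ∀ w ∈ S, ¬ (rg ω).Adj v w then wt (1/(m:ℚ)) q ω else 0) :=
        Finset.sum_comm
    _ ≤ ∑ S ∈ SS, ((1:ℚ)/3)^(n+1) := by
        refine Finset.sum_le_sum fun S hS => ?_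
        rw [hSS, Finset.mem_filter] at hS
        have hcard := hS.2
        -- event implies all slots inside S are absent
        have hbd : ∀ ω : Slot n → Bool,
            (if ∀ v ∈ S, ∀ w ∈ S, ¬ (rg ω).Adj v w then wt (1/(m:ℚ)) q ω else 0)
              ≤ (if ∀ e ∈ sslots S, ω e = (fun _ => false) e then wt (1/(m:ℚ)) q ω else 0) := by
          intro ω
          split_ifs with h1 h2
          · exact le_refl _
          · exact absurd (slots_absent_of_indep h1) h2
          · exact hwt ω
          · exact le_refl _
        calc ∑ ω : Slot n → Bool,
              (if ∀ v ∈ S, ∀ w ∈ S, ¬ (rg ω).Adj v w then wt (1/(m:ℚ)) q ω else 0)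
            ≤ ∑ ω : Slot n → Bool,
              (if ∀ e ∈ sslots S, ω e = (fun _ => false) e then wt (1/(m:ℚ)) q ω else 0) :=
              Finset.sum_le_sum fun ω _ => hbd ω
          _ = ∏ e ∈ sslots S, (if (fun _ => false) e then (1:ℚ)/m else q) :=
              sum_wt_restrict _ _ hp0 hq0 hpq _ _
          _ = q^((sslots S).card) := by
              rw [Finset.prod_congr rfl (fun e _ => if_neg (by simp)), Finset.prod_const]
          _ ≤ q^(2*(m*(n+1))) := by
              apply pow_le_pow_of_le_one hq0 hq1
              exact sslots_card_ge hcard ht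
          _ = (q^(2*m))^(n+1) := by rw [← pow_mul]; ring_nf
          _ ≤ ((1:ℚ)/3)^(n+1) := pow_le_pow_left₀ (pow_nonneg hq0 _) hq3 _
    _ = (SS.card : ℚ) * ((1:ℚ)/3)^(n+1) := by rw [Finset.sum_const, nsmul_eq_mul]
    _ < 1/2 := by
        have hSScard : SS.card ≤ 2^n := by
          calc SS.card ≤ (Finset.univ : Finset (Finset (Fin n))).card := Finset.card_filter_le _ _
            _ = 2^n := by rw [Finset.card_univ, Fintype.card_finset, Fintype.card_fin]
        have h2 : (SS.card : ℚ) ≤ (2:ℚ)^n := by exact_mod_cast hSScard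
        have hlt : (2:ℚ)^n * ((1:ℚ)/3)^(n+1) < 1/2 := by
          have h3pos : (0:ℚ) < 3^(n+1) := by positivity
          rw [div_pow, one_pow, mul_one_div, div_lt_div_iff₀ h3pos (by norm_num : (0:ℚ) < 2)]
          have h23 : (2:ℚ)^(n+1) < 3^(n+1) := by
            have := Nat.pow_lt_pow_left (by norm_num : 2 < 3) (Nat.succ_ne_zero n)
            exact_mod_cast this
          calc (2:ℚ)^n * 2 = 2^(n+1) := by ring
            _ < 3^(n+1) := h23
            _ = 1 * 3^(n+1) := (one_mul _).symm
        calc (SS.card : ℚ) * ((1:ℚ)/3)^(n+1) ≤ (2:ℚ)^n * ((1:ℚ)/3)^(n+1) :=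
              mul_le_mul_of_nonneg_right h2 (by positivity)
          _ < 1/2 := hlt

lemma cyclelist_of_cycle {n : ℕ} [NeZero n] {G : SimpleGraph (Fin n)} {a : Fin n}
    (w : G.Walk a a) (hw : w.IsCycle) :
    IsCycleList G w.support.dropLast ∧ w.support.dropLast.headI = a ∧
      w.support.dropLast.length = w.length := by
  have hsupne : w.support ≠ [] := w.support_ne_nil
  have hlen : w.support.length = w.length + 1 := SimpleGraph.Walk.length_support w
  have h3 : 3 ≤ w.length := hw.three_le_length
  have hℓlen : w.support.dropLast.length = w.length := by
    rw [List.length_dropLast, hlen]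
    omega
  have hsplit : w.support.dropLast ++ [a] = w.support := by
    have := List.dropLast_append_getLast hsupne
    rwa [SimpleGraph.Walk.getLast_support w] at this
  have hcons : w.support = a :: w.support.tail := SimpleGraph.Walk.support_eq_cons w
  have hne : w.support.dropLast ≠ [] := by
    intro h
    rw [h] at hℓlen
    simp at hℓlen
    omega
  obtain ⟨b, ℓt, hbt⟩ : ∃ b ℓt, w.support.dropLast = b :: ℓt := by
    cases hx : w.support.dropLast with
    | nil => exact absurd hx hne
    | cons b ℓt => exact ⟨b, ℓt, rfl⟩
  have hba : b = a ∧ w.support.tail = ℓt ++ [a] := by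
    rw [hbt] at hsplit
    rw [hcons] at hsplit
    simp only [List.cons_append, List.cons.injEq] at hsplit
    exact ⟨hsplit.1, hsplit.2.symm⟩
  have hheadI : w.support.dropLast.headI = a := by rw [hbt, hba.1]; rfl
  have htnd : w.support.tail.Nodup := ((SimpleGraph.Walk.isCycle_def _).mp hw).2.2
  have hnd : w.support.dropLast.Nodup := by
    rw [hbt, hba.1]
    rw [hba.2] at htnd
    rw [List.nodup_append] at htnd
    obtain ⟨h1, _, h3'⟩ := htnd
    rw [List.nodup_cons]
    refine ⟨fun ha => ?_, h1⟩
    exact h3' a ha a (by simp) rfl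
  have hchain : List.Chain' G.Adj (w.support.dropLast ++ [w.support.dropLast.headI]) := by
    rw [hheadI, hsplit]
    exact SimpleGraph.Walk.isChain_adj_support w
  exact ⟨⟨by omega, hnd, hchain⟩, hheadI, hℓlen⟩

lemma girth_of_good {n g : ℕ} [NeZero n] (ω : Slot n → Bool) (D : Finset (Fin n))
    (hD : ∀ ℓ ∈ allShort n g, IsCycleList (rg ω) ℓ → ℓ.headI ∈ D) :
    ∀ (a : ↥((↑(Dᶜ) : Set (Fin n)))) (w : (SimpleGraph.induce (↑(Dᶜ) : Set (Fin n)) (rg ω)).Walk a a),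
      w.IsCycle → g ≤ w.length := by
  intro a w hw
  by_contra hlt
  push_neg at hlt
  set emb := SimpleGraph.Embedding.induce (G := rg ω) ((↑(Dᶜ) : Set (Fin n)))
  set w' := w.map emb.toHom with hw'
  have hw'cyc : w'.IsCycle :=
    (SimpleGraph.Walk.map_isCycle_iff_of_injective emb.injective).mpr hw
  have hw'len : w'.length = w.length := SimpleGraph.Walk.length_map _ _
  obtain ⟨hcl, hhead, hlen⟩ := cyclelist_of_cycle w' hw'cyc
  have hmem : w'.support.dropLast ∈ allShort n g := by
    rw [mem_allShort, hlen, hw'len]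
    exact hlt
  have hin : w'.support.dropLast.headI ∈ D := hD _ hmem hcl
  rw [hhead] at hin
  -- but emb a = a.1 ∉ D
  have h1 : (a : Fin n) ∈ (Dᶜ : Finset (Fin n)) := Finset.mem_coe.mp a.2
  have h2 : (a : Fin n) ∉ D := Finset.mem_compl.mp h1
  exact h2 hin

lemma coloring_bound {n t c : ℕ} [NeZero n] (ω : Slot n → Bool) (D : Finset (Fin n))
    (hindep : ¬ ∃ S : Finset (Fin n), S.card = t ∧ ∀ v ∈ S, ∀ w ∈ S, ¬(rg ω).Adj v w)
    (hcol : (SimpleGraph.induce (↑(Dᶜ) : Set (Fin n)) (rg ω)).Colorable c) :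
    n - D.card ≤ c * (t-1) := by
  classical
  obtain ⟨C⟩ := hcol
  have hcard : Fintype.card ↥((↑(Dᶜ) : Set (Fin n))) = n - D.card := by
    rw [← Set.toFinset_card, Finset.toFinset_coe, Finset.card_compl, Fintype.card_fin]
  have hfiber : ∀ j : Fin c,
      ((Finset.univ : Finset ↥((↑(Dᶜ) : Set (Fin n)))).filter (fun v => C v = j)).card ≤ t - 1 := by
    intro j
    by_contra hbig
    push_neg at hbig
    obtain ⟨T, hT, hTcard⟩ := Finset.exists_subset_card_eq (by omega :
      t ≤ ((Finset.univ : Finset ↥((↑(Dᶜ) : Set (Fin n)))).filter (fun v => C v = j)).card)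
    apply hindep
    refine ⟨T.image Subtype.val, ?_, ?_⟩
    · rw [Finset.card_image_of_injective _ Subtype.val_injective, hTcard]
    · intro v hv u hu hadj
      rw [Finset.mem_image] at hv hu
      obtain ⟨x, hx, rfl⟩ := hv
      obtain ⟨y, hy, rfl⟩ := hu
      have hxy : x ≠ y := fun h => (hadj.ne (congrArg Subtype.val h))
      have hadj' : (SimpleGraph.induce (↑(Dᶜ) : Set (Fin n)) (rg ω)).Adj x y := hadj
      have hcx := (hT hx)
      have hcy := (hT hy)
      rw [Finset.mem_filter] at hcx hcy
      exact C.valid hadj' (hcx.2.trans hcy.2.symm)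
  have hsum : (Finset.univ : Finset ↥((↑(Dᶜ) : Set (Fin n)))).card
      = ∑ j : Fin c, ((Finset.univ : Finset ↥((↑(Dᶜ) : Set (Fin n)))).filter
          (fun v => C v = j)).card :=
    Finset.card_eq_sum_card_fiberwise (fun v _ => Finset.mem_univ (C v))
  have htot : (Finset.univ : Finset ↥((↑(Dᶜ) : Set (Fin n)))).card ≤ c * (t-1) := by
    rw [hsum]
    calc ∑ j : Fin c, ((Finset.univ : Finset ↥((↑(Dᶜ) : Set (Fin n)))).filter
          (fun v => C v = j)).card
        ≤ ∑ _j : Fin c, (t-1) := Finset.sum_le_sum fun j _ => hfiber j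
      _ = c * (t-1) := by rw [Finset.sum_const, Finset.card_univ, Fintype.card_fin, smul_eq_mul]
  rw [Finset.card_univ, hcard] at htot
  exact htot

set_option maxHeartbeats 1600000 in
theorem generic (g k n m t : ℕ) (hg : 3 ≤ g) (hm : 1 ≤ m) (hn : 1 ≤ n)
    (hcyc : ∑ i ∈ Finset.Icc 3 (g-1), (n:ℚ)^i * (1/(m:ℚ))^i ≤ (n:ℚ)/4)
    (ht : 4*(m*(n+1)) ≤ t*(t-1))
    (hnk : 2*(k*t) ≤ n) :
    ∃ (V : Type) (_ : Fintype V) (G : SimpleGraph V),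
      (∀ (a : V) (w : G.Walk a a), w.IsCycle → g ≤ w.length) ∧
      (∀ c, G.Colorable c → k ≤ c) := by
  classical
  haveI : NeZero n := ⟨by omega⟩
  have hm' : (1:ℚ) ≤ (m:ℚ) := by exact_mod_cast hm
  have hn' : (1:ℚ) ≤ (n:ℚ) := by exact_mod_cast hn
  have hp0 : 0 ≤ (1:ℚ)/m := by positivity
  have hq0 : 0 ≤ 1 - 1/(m:ℚ) := by
    rw [sub_nonneg, div_le_one (by linarith)]; linarith
  have hpq : (1:ℚ)/m + (1 - 1/(m:ℚ)) = 1 := by ring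
  have hwt : ∀ ω : Slot n → Bool, 0 ≤ wt (1/(m:ℚ)) (1-1/(m:ℚ)) ω := wt_nonneg _ _ hp0 hq0
  set X : (Slot n → Bool) → ℚ := fun ω =>
    (((allShort n g).filter (fun ℓ => IsCycleList (rg ω) ℓ)).card : ℚ) with hX
  -- Markov bound
  have hmark : ∑ ω : Slot n → Bool,
      (if (n:ℚ)/2 ≤ X ω then wt (1/(m:ℚ)) (1-1/(m:ℚ)) ω else 0) ≤ 1/2 := by
    have hhalf : (0:ℚ) < (n:ℚ)/2 := by linarith
    calc ∑ ω : Slot n → Bool, (if (n:ℚ)/2 ≤ X ω then wt (1/(m:ℚ)) (1-1/(m:ℚ)) ω else 0)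
        ≤ (∑ ω : Slot n → Bool, wt (1/(m:ℚ)) (1-1/(m:ℚ)) ω * X ω) / ((n:ℚ)/2) :=
          markov _ _ hwt (fun ω => by positivity) _ hhalf
      _ ≤ ((n:ℚ)/4) / ((n:ℚ)/2) := by
          gcongr
          exact (expectation_bound g hm).trans hcyc
      _ = 1/2 := by
          have hn0 : (n:ℚ) ≠ 0 := by
            intro h
            rw [h] at hn'
            norm_num at hn'
          field_simp
          ring
  have hindepb := indep_sum_bound (n := n) (m := m) (t := t) hm hn ht
  -- combine the two bad events
  have hptw : ∀ ω : Slot n → Bool,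
      (if ((n:ℚ)/2 ≤ X ω) ∨
          (∃ S : Finset (Fin n), S.card = t ∧ ∀ v ∈ S, ∀ w ∈ S, ¬ (rg ω).Adj v w)
        then wt (1/(m:ℚ)) (1-1/(m:ℚ)) ω else 0)
        ≤ (if (n:ℚ)/2 ≤ X ω then wt (1/(m:ℚ)) (1-1/(m:ℚ)) ω else 0)
          + (if (∃ S : Finset (Fin n), S.card = t ∧ ∀ v ∈ S, ∀ w ∈ S, ¬ (rg ω).Adj v w)
              then wt (1/(m:ℚ)) (1-1/(m:ℚ)) ω else 0) := by
    intro ω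
    have h0 := hwt ω
    by_cases h1 : (n:ℚ)/2 ≤ X ω <;>
      by_cases h2 : (∃ S : Finset (Fin n), S.card = t ∧ ∀ v ∈ S, ∀ w ∈ S, ¬ (rg ω).Adj v w)
    · rw [if_pos (Or.inl h1), if_pos h1, if_pos h2]; linarith
    · rw [if_pos (Or.inl h1), if_pos h1, if_neg h2]; linarith
    · rw [if_pos (Or.inr h2), if_neg h1, if_pos h2]; linarith
    · rw [if_neg (not_or.mpr ⟨h1, h2⟩), if_neg h1, if_neg h2]; norm_num
  have hlt : ∑ ω : Slot n → Bool,
      (if ((n:ℚ)/2 ≤ X ω) ∨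
          (∃ S : Finset (Fin n), S.card = t ∧ ∀ v ∈ S, ∀ w ∈ S, ¬ (rg ω).Adj v w)
        then wt (1/(m:ℚ)) (1-1/(m:ℚ)) ω else 0)
      < ∑ ω : Slot n → Bool, wt (1/(m:ℚ)) (1-1/(m:ℚ)) ω := by
    calc ∑ ω : Slot n → Bool,
        (if ((n:ℚ)/2 ≤ X ω) ∨
            (∃ S : Finset (Fin n), S.card = t ∧ ∀ v ∈ S, ∀ w ∈ S, ¬ (rg ω).Adj v w)
          then wt (1/(m:ℚ)) (1-1/(m:ℚ)) ω else 0)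
        ≤ (∑ ω : Slot n → Bool, (if (n:ℚ)/2 ≤ X ω then wt (1/(m:ℚ)) (1-1/(m:ℚ)) ω else 0))
          + ∑ ω : Slot n → Bool,
            (if (∃ S : Finset (Fin n), S.card = t ∧ ∀ v ∈ S, ∀ w ∈ S, ¬ (rg ω).Adj v w)
              then wt (1/(m:ℚ)) (1-1/(m:ℚ)) ω else 0) := by
          rw [← Finset.sum_add_distrib]
          exact Finset.sum_le_sum fun ω _ => hptw ω
      _ < 1/2 + 1/2 := by
          apply add_lt_add_of_le_of_lt hmark hindepb
      _ = 1 := by norm_num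
      _ = ∑ ω : Slot n → Bool, wt (1/(m:ℚ)) (1-1/(m:ℚ)) ω := (sum_wt _ _ hpq).symm
  obtain ⟨ω, hgood⟩ := exists_good _ hwt
    (fun ω => ((n:ℚ)/2 ≤ X ω) ∨
      (∃ S : Finset (Fin n), S.card = t ∧ ∀ v ∈ S, ∀ w ∈ S, ¬ (rg ω).Adj v w)) hlt
  have hgood2 : ¬(((n:ℚ)/2 ≤ X ω) ∨
      (∃ S : Finset (Fin n), S.card = t ∧ ∀ v ∈ S, ∀ w ∈ S, ¬ (rg ω).Adj v w)) := hgood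
  obtain ⟨hXsm0, hnoindep⟩ := not_or.mp hgood2
  have hXsmall : X ω < (n:ℚ)/2 := not_le.mp hXsm0
  -- the deletion set
  set D : Finset (Fin n) :=
    ((allShort n g).filter (fun ℓ => IsCycleList (rg ω) ℓ)).image (fun ℓ => ℓ.headI) with hD
  have hDcard : D.card ≤ ((allShort n g).filter (fun ℓ => IsCycleList (rg ω) ℓ)).card :=
    Finset.card_image_le
  have hDsmall : 2 * D.card < n := by
    have h1 : (D.card : ℚ) < (n:ℚ)/2 := by
      apply lt_of_le_of_lt _ hXsmall
      show (D.card : ℚ) ≤ ((((allShort n g).filter (fun ℓ => IsCycleList (rg ω) ℓ)).card : ℕ) : ℚ)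
      exact_mod_cast hDcard
    have h2 : (2 * D.card : ℚ) < n := by linarith
    exact_mod_cast h2
  refine ⟨↥((↑(Dᶜ) : Set (Fin n))), inferInstance,
    SimpleGraph.induce (↑(Dᶜ) : Set (Fin n)) (rg ω), ?_, ?_⟩
  · -- girth
    apply girth_of_good ω D
    intro ℓ hℓ hcl
    rw [hD]
    apply Finset.mem_image_of_mem
    rw [Finset.mem_filter]
    exact ⟨hℓ, hcl⟩
  · -- chromatic
    intro c hcol
    have hcb : n - D.card ≤ c * (t-1) := coloring_bound ω D hnoindep hcol
    -- t ≥ 2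
    have hmn2 : 2 ≤ m * (n+1) := by
      calc 2 = 1 * 2 := by norm_num
        _ ≤ m * (n+1) := Nat.mul_le_mul hm (by omega)
    have ht2 : 2 ≤ t := by
      rcases Nat.lt_or_ge t 2 with h | h
      · exfalso
        interval_cases t <;> simp_all <;> omega
      · exact h
    have hktn : k * t < n - D.card := by
      have h1 : 2*(k*t) ≤ n := hnk
      omega
    have hfin : k * (t-1) < c * (t-1) := by
      calc k * (t-1) ≤ k * t := Nat.mul_le_mul_left k (by omega)
        _ < n - D.card := hktn
        _ ≤ c * (t-1) := hcb
    have : k < c := lt_of_mul_lt_mul_right hfin (Nat.zero_le _)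
    omega

lemma erdos_main (g k : ℕ) (hg : 3 ≤ g) :
    ∃ (V : Type) (_ : Fintype V) (G : SimpleGraph V),
      (∀ (a : V) (w : G.Walk a a), w.IsCycle → g ≤ w.length) ∧
      (∀ c, G.Colorable c → k ≤ c) := by
  set M : ℕ := 1152 * g * (k+1)^2 with hM
  set n : ℕ := M^(g-1) with hn
  set m : ℕ := 4*g*M^(g-2) with hm
  set t : ℕ := Nat.sqrt (4*(m*(n+1))) + 2 with htdef
  have hgpos : 0 < g := by omega
  have hMpos : 0 < M := by positivity
  have hmpos : 0 < m := by positivity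
  have hnpos : 0 < n := by positivity
  have hpow : M^(g-1) = M^(g-2)*M := by
    rw [← pow_succ]
    congr 1
    omega
  have hM4g : 4*g ≤ M := by
    rw [hM]
    calc 4*g ≤ (1152*(k+1)^2)*g := by
          apply Nat.mul_le_mul_right
          nlinarith [Nat.zero_le k]
      _ = 1152*g*(k+1)^2 := by ring
  -- hcyc
  have hcyc : ∑ i ∈ Finset.Icc 3 (g-1), (n:ℚ)^i * (1/(m:ℚ))^i ≤ (n:ℚ)/4 := by
    have hM0 : ((M:ℚ)) ≠ 0 := by positivity
    have hg0 : ((g:ℚ)) ≠ 0 := by positivity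
    have hm0 : ((m:ℚ)) ≠ 0 := by positivity
    have h4g0 : (0:ℚ) < 4*(g:ℚ) := by positivity
    set r : ℚ := (M:ℚ)/(4*(g:ℚ)) with hr
    have hterm : ∀ i : ℕ, (n:ℚ)^i * (1/(m:ℚ))^i = r^i := by
      intro i
      rw [← mul_pow]
      congr 1
      rw [hr, hn, hm]
      push_cast
      have hpowQ : ((M:ℚ))^(g-1) = ((M:ℚ))^(g-2)*(M:ℚ) := by exact_mod_cast hpow
      rw [hpowQ]
      field_simp
    have hr1 : 1 ≤ r := by
      rw [hr, le_div_iff₀ h4g0, one_mul]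
      exact_mod_cast hM4g
    have hrg : ∀ i ∈ Finset.Icc 3 (g-1), r^i ≤ r^(g-1) := by
      intro i hi
      rw [Finset.mem_Icc] at hi
      exact pow_le_pow_right₀ hr1 hi.2
    have hsum : ∑ i ∈ Finset.Icc 3 (g-1), (n:ℚ)^i * (1/(m:ℚ))^i
        ≤ (g:ℚ) * r^(g-1) := by
      calc ∑ i ∈ Finset.Icc 3 (g-1), (n:ℚ)^i * (1/(m:ℚ))^i
          = ∑ i ∈ Finset.Icc 3 (g-1), r^i := Finset.sum_congr rfl fun i _ => hterm i
        _ ≤ ∑ _i ∈ Finset.Icc 3 (g-1), r^(g-1) := Finset.sum_le_sum hrg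
        _ = ((Finset.Icc 3 (g-1)).card : ℚ) * r^(g-1) := by
            rw [Finset.sum_const, nsmul_eq_mul]
        _ ≤ (g:ℚ) * r^(g-1) := by
            apply mul_le_mul_of_nonneg_right _ (by positivity)
            have : (Finset.Icc 3 (g-1)).card ≤ g := by
              rw [Nat.card_Icc]
              omega
            exact_mod_cast this
    have hrpow : r^(g-1) = (n:ℚ)/((4*(g:ℚ))^(g-1)) := by
      rw [hr, div_pow, hn]
      push_cast
      ring_nf
    have hlast : (g:ℚ) * r^(g-1) ≤ (n:ℚ)/4 := by
      rw [hrpow]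
      have h4gpow : 4*(g:ℚ) ≤ (4*(g:ℚ))^(g-1) := by
        calc 4*(g:ℚ) = (4*(g:ℚ))^1 := (pow_one _).symm
          _ ≤ (4*(g:ℚ))^(g-1) := by
              apply pow_le_pow_right₀ (by linarith [show (1:ℚ) ≤ (g:ℚ) by exact_mod_cast hgpos])
              omega
      have hmono : (n:ℚ)/((4*(g:ℚ))^(g-1)) ≤ (n:ℚ)/(4*(g:ℚ)) :=
        div_le_div_of_nonneg_left (by positivity) h4g0 h4gpow
      calc (g:ℚ) * ((n:ℚ)/((4*(g:ℚ))^(g-1))) ≤ (g:ℚ) * ((n:ℚ)/(4*(g:ℚ))) :=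
            mul_le_mul_of_nonneg_left hmono (by positivity)
        _ = (n:ℚ)/4 := by field_simp
    exact hsum.trans hlast
  -- ht
  have ht : 4*(m*(n+1)) ≤ t*(t-1) := by
    have h1 := Nat.lt_succ_sqrt (4*(m*(n+1)))
    set s := Nat.sqrt (4*(m*(n+1))) with hs
    have h2 : t*(t-1) = (s+2)*(s+1) := by
      rw [htdef]
      have h3 : s + 2 - 1 = s + 1 := by omega
      rw [h3]
    rw [h2]
    nlinarith [h1]
  -- hnk
  have hnk : 2*(k*t) ≤ n := by
    set s := Nat.sqrt (4*(m*(n+1))) with hs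
    have hs2 : s*s ≤ 4*(m*(n+1)) := Nat.sqrt_le _
    have hts : t = s + 2 := htdef
    clear_value s
    clear hs
    have hmn1 : 1 ≤ m*n := Nat.mul_le_mul hmpos hnpos
    have ht2 : t*t ≤ 32*(m*n) := by
      rcases Nat.lt_or_ge s 2 with hsl | hsl
      · have htt : t*t ≤ 16 := by
          rw [hts]
          interval_cases s <;> norm_num
        omega
      · have h1 : t ≤ 2*s := by omega
        have hmn2 : m*(n+1) ≤ 2*(m*n) := by
          have : m*(n+1) = m*n + m := by ring
          have h2 : m ≤ m*n := Nat.le_mul_of_pos_right m hnpos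
          omega
        calc t*t ≤ (2*s)*(2*s) := Nat.mul_le_mul h1 h1
          _ = 4*(s*s) := by ring
          _ ≤ 4*(4*(m*(n+1))) := by omega
          _ ≤ 4*(4*(2*(m*n))) := by omega
          _ = 32*(m*n) := by ring
    have hstep : 128*((k*k)*m) ≤ n := by
      have hkk : 512*(k*k)*g ≤ M := by
        rw [hM]
        nlinarith [Nat.zero_le k, hgpos]
      calc 128*((k*k)*m) = (512*(k*k)*g)*M^(g-2) := by rw [hm]; ring
        _ ≤ M*M^(g-2) := Nat.mul_le_mul_right _ hkk
        _ = n := by rw [hn, hpow]; ring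
    have key2 : (2*(k*t))*(2*(k*t)) ≤ n*n := by
      calc (2*(k*t))*(2*(k*t)) = (4*(k*k))*(t*t) := by ring
        _ ≤ (4*(k*k))*(32*(m*n)) := Nat.mul_le_mul_left _ ht2
        _ = (128*((k*k)*m))*n := by ring
        _ ≤ n*n := Nat.mul_le_mul_right _ hstep
    by_contra hc
    push_neg at hc
    have : n*n < (2*(k*t))*(2*(k*t)) := Nat.mul_lt_mul_of_lt_of_le hc (le_of_lt hc) (by omega)
    omega
  exact generic g k n m t hg hmpos hnpos hcyc ht hnk

end ErdosGirth

/-- For all g and k there is a finite graph with girth at least g and chromatic number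
at least k (Erdős). -/
theorem stmt18 (g k : ℕ) :
    ∃ (V : Type) (_ : Fintype V) (G : SimpleGraph V),
      (g : ℕ∞) ≤ G.girth ∧ (k : ℕ∞) ≤ G.chromaticNumber := by
  obtain ⟨V, hF, G, hgirth, hchrom⟩ := ErdosGirth.erdos_main (max g 3) (max k 3)
    (le_max_right _ _)
  refine ⟨V, hF, G, ?_, ?_⟩
  · have hnotacyc : ¬ G.IsAcyclic := by
      intro hacyc
      have h2 := ErdosGirth.colorable_two_of_isAcyclic hacyc
      have h3 := hchrom 2 h2
      have h4 : (3:ℕ) ≤ 2 := le_trans (le_max_right k 3) h3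
      omega
    obtain ⟨a, w, hw, hgeq⟩ := (SimpleGraph.exists_girth_eq_length).mpr hnotacyc
    have h1 : max g 3 ≤ w.length := hgirth a w hw
    have h2 : g ≤ G.girth := by
      rw [hgeq]
      exact le_trans (le_max_left _ _) h1
    exact_mod_cast h2
  · rw [SimpleGraph.chromaticNumber]
    refine le_iInf₂ fun c hc => ?_
    have := hchrom c hc
    have h2 : k ≤ c := le_trans (le_max_left k 3) this
    exact_mod_cast h2
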